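/- Let k_o > 0, let α : ℝ → ℝ be continuous and bounded, and let d : ℝ → ℝ be twice differentiable with d(0) > 0 and d(t) > 0 for all t ≥ 0, satisfying d''(t) = −k_o·d'(t)/d(t) − α(t) for all t ≥ 0. If d(t) → 0 as t → ∞, then the divergent flow φ(t) := d'(t)/d(t) is bounded on [0, ∞). -/

import Mathlib

open Filter Set

/-- Fencing lemma: if `f a ≤ B` and whenever `f` touches the level `B`
its derivative is negative, then `f` stays below `B` on `[a, ∞)`. -/
theorem fence_le {f f' : ℝ → ℝ} {a B : ℝ}
    (hf : ∀ t ≥ a, HasDerivAt f (f' t) t) (ha : f a ≤ B)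
    (bound : ∀ t ≥ a, f t = B → f' t < 0) :
    ∀ t ≥ a, f t ≤ B := by
  intro t ht
  have h := image_le_of_deriv_right_lt_deriv_boundary (f := f) (f' := f')
    (a := a) (b := t) (B := fun _ => B) (B' := fun _ => 0)
    (fun x hx => (hf x hx.1).continuousAt.continuousWithinAt)
    (fun x hx => (hf x hx.1).hasDerivWithinAt)
    ha (fun x => hasDerivAt_const x B)
    (fun x hx hfx => bound x hx.1 hfx)
  exact h (Set.mem_Icc.2 ⟨ht, le_refl t⟩)

/-- Second part of item 3 of Lemma 1: if the distance `d` governed by the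
barrier ODE `d'' = -k_o * d'/d - α` (with `d > 0` on `[0, ∞)`) converges to
zero, then the divergent flow `φ = d'/d` remains bounded on `[0, ∞)`. -/
theorem barrier_divergent_flow_bounded
    (k_o : ℝ) (hk : 0 < k_o) (α d : ℝ → ℝ)
    (hα_cont : Continuous α) (hα_bdd : ∃ M, ∀ t, |α t| ≤ M)
    (hd1 : Differentiable ℝ d) (hd2 : Differentiable ℝ (deriv d))
    (hd0 : 0 < d 0) (hdpos : ∀ t ≥ (0:ℝ), 0 < d t)
    (hode : ∀ t ≥ (0:ℝ),
      deriv (deriv d) t = -k_o * deriv d t / d t - α t)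
    (hdlim : Tendsto d atTop (nhds 0)) :
    ∃ M, ∀ t ≥ (0:ℝ), |deriv d t / d t| ≤ M := by
  obtain ⟨M₀, hM₀⟩ := hα_bdd
  obtain ⟨M, hMdef⟩ : ∃ x : ℝ, x = max M₀ 0 := ⟨_, rfl⟩
  have hM : ∀ t, |α t| ≤ M := fun t => le_trans (hM₀ t) (hMdef ▸ le_max_left _ _)
  have hM0 : 0 ≤ M := hMdef ▸ le_max_right _ _
  -- the derivative of φ = d'/d
  have hφ : ∀ t ≥ (0:ℝ), HasDerivAt (fun t => deriv d t / d t)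
      ((-k_o * (deriv d t / d t) - α t) / d t - (deriv d t / d t)^2) t := by
    intro t ht
    have hdt : d t ≠ 0 := ne_of_gt (hdpos t ht)
    have h := ((hd2 t).hasDerivAt).div ((hd1 t).hasDerivAt) hdt
    refine h.congr_deriv ?_
    rw [hode t ht]
    field_simp
  -- upper bound
  obtain ⟨B, hBdef⟩ : ∃ x : ℝ, x = max (deriv d 0 / d 0) (M / k_o) + 1 := ⟨_, rfl⟩
  have hB1 : M / k_o + 1 ≤ B := by
    rw [hBdef]; have := le_max_right (deriv d 0 / d 0) (M / k_o); linarith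
  have hB0 : deriv d 0 / d 0 ≤ B := by
    rw [hBdef]; have := le_max_left (deriv d 0 / d 0) (M / k_o); linarith
  have hkM : k_o * (M / k_o) = M := by field_simp
  have hkB : M + k_o ≤ k_o * B := by
    have h := mul_le_mul_of_nonneg_left hB1 hk.le
    rw [mul_add, hkM, mul_one] at h
    exact h
  have hub : ∀ t ≥ (0:ℝ), deriv d t / d t ≤ B := by
    refine fence_le hφ hB0 ?_
    intro t ht hfx
    rw [hfx]
    have hdt : 0 < d t := hdpos t ht
    have hαt := (abs_le.1 (hM t)).1
    have h1 : -k_o * B - α t < 0 := by linarith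
    have h2 : (-k_o * B - α t) / d t < 0 := div_neg_of_neg_of_pos h1 hdt
    nlinarith [sq_nonneg B]
  -- lower bound setup
  obtain ⟨c, hcdef⟩ : ∃ x : ℝ, x = 2 * M / k_o + 1 := ⟨_, rfl⟩
  have hc1 : (1:ℝ) ≤ c := by
    rw [hcdef]
    have : 0 ≤ 2 * M / k_o := by positivity
    linarith
  have hkc : k_o * c = 2 * M + k_o := by rw [hcdef]; field_simp
  obtain ⟨ε, hεdef⟩ : ∃ x : ℝ, x = (M + k_o) / (c ^ 2 + 1) := ⟨_, rfl⟩
  have hε : 0 < ε := by rw [hεdef]; positivity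
  obtain ⟨T₀, hT₀⟩ := eventually_atTop.1 (hdlim.eventually (gt_mem_nhds hε))
  obtain ⟨T, hTdef⟩ : ∃ x : ℝ, x = max T₀ 0 := ⟨_, rfl⟩
  have hT0 : (0:ℝ) ≤ T := hTdef ▸ le_max_right _ _
  have hTT₀ : T₀ ≤ T := hTdef ▸ le_max_left _ _
  -- there is a time t₀ ≥ T where φ t₀ ≥ -c
  have ht₀ : ∃ t₀ ≥ T, -c ≤ deriv d t₀ / d t₀ := by
    by_contra h
    push_neg at h
    -- then d'' ≥ M + k_o on [T, ∞)
    have hdd : ∀ t ∈ interior (Ici T), 0 ≤ deriv (fun t => deriv d t - (M + k_o) * t) t := by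
      intro t ht
      rw [interior_Ici] at ht
      have htT : T ≤ t := le_of_lt ht
      have ht0 : (0:ℝ) ≤ t := le_trans hT0 htT
      have hder : HasDerivAt (fun t => deriv d t - (M + k_o) * t)
          (deriv (deriv d) t - (M + k_o)) t := by
        exact (((hd2 t).hasDerivAt).sub ((hasDerivAt_id t).const_mul (M + k_o))).congr_deriv (by ring)
      rw [hder.deriv, hode t ht0]
      have hφt := h t htT
      have hdt : 0 < d t := hdpos t ht0
      have hαt := (abs_le.1 (hM t)).2
      have hmul : -k_o * deriv d t / d t = -k_o * (deriv d t / d t) := by ring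
      rw [hmul]
      have h5 := mul_lt_mul_of_pos_left hφt hk
      linarith [h5, hkc]
    have hmono : MonotoneOn (fun t => deriv d t - (M + k_o) * t) (Ici T) := by
      refine monotoneOn_of_deriv_nonneg (convex_Ici T) ?_ ?_ hdd
      · exact (hd2.continuous.sub (continuous_const.mul continuous_id)).continuousOn
      · exact (hd2.sub ((differentiable_id.const_mul _))).differentiableOn
    obtain ⟨t₁, ht₁def⟩ : ∃ x : ℝ, x = T + (|deriv d T| + 1) / (M + k_o) := ⟨_, rfl⟩
    have hMk : (0:ℝ) < M + k_o := by linarith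
    have hq : 0 ≤ (|deriv d T| + 1) / (M + k_o) := by positivity
    have ht₁T : T ≤ t₁ := by rw [ht₁def]; linarith
    have hgm := hmono (mem_Ici.2 (le_refl T)) (mem_Ici.2 ht₁T) ht₁T
    have hval : (M + k_o) * t₁ - (M + k_o) * T = |deriv d T| + 1 := by
      rw [ht₁def]; field_simp; ring
    have hgm' : deriv d T - (M + k_o) * T ≤ deriv d t₁ - (M + k_o) * t₁ := hgm
    have habs := neg_abs_le (deriv d T)
    have hpos : 0 < deriv d t₁ := by linarith
    have hφt₁ := h t₁ ht₁T
    have hdt₁ : 0 < d t₁ := hdpos t₁ (le_trans hT0 ht₁T)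
    have hneg : deriv d t₁ / d t₁ < 0 := lt_trans hφt₁ (by linarith)
    have : deriv d t₁ < 0 := by
      by_contra hge
      push_neg at hge
      exact absurd (div_nonneg hge (le_of_lt hdt₁)) (not_le.2 hneg)
    linarith
  obtain ⟨t₀, ht₀T, ht₀c⟩ := ht₀
  have ht₀0 : (0:ℝ) ≤ t₀ := le_trans hT0 ht₀T
  -- invariance: φ ≥ -c on [t₀, ∞)
  have hlow : ∀ t ≥ t₀, -(deriv d t / d t) ≤ c := by
    refine fence_le (f := fun t => -(deriv d t / d t))
      (f' := fun t => -((-k_o * (deriv d t / d t) - α t) / d t - (deriv d t / d t)^2))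
      (fun t ht => (hφ t (le_trans ht₀0 ht)).neg) (by linarith) ?_
    intro t ht hfx
    have hfx' : -(deriv d t / d t) = c := hfx
    have hφt : deriv d t / d t = -c := by linarith
    have ht0 : (0:ℝ) ≤ t := le_trans ht₀0 ht
    have hdt : 0 < d t := hdpos t ht0
    have hdtε : d t < ε := hT₀ t (le_trans hTT₀ (le_trans ht₀T ht))
    have hαt := (abs_le.1 (hM t)).2
    show -((-k_o * (deriv d t / d t) - α t) / d t - (deriv d t / d t)^2) < 0
    rw [hφt]
    have h1 : M + k_o ≤ -k_o * (-c) - α t := by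
      have := hkc
      nlinarith
    have h2 : (M + k_o) / d t ≤ (-k_o * (-c) - α t) / d t :=
      div_le_div_of_nonneg_right h1 hdt.le
    have h3 : c ^ 2 + 1 < (M + k_o) / d t := by
      rw [lt_div_iff₀ hdt]
      calc (c ^ 2 + 1) * d t < (c ^ 2 + 1) * ε := by
            apply mul_lt_mul_of_pos_left hdtε; positivity
        _ = M + k_o := by rw [hεdef]; field_simp
    nlinarith [sq_nonneg c]
  -- bound on the compact interval [0, t₀]
  have hcont : ContinuousOn (fun t => deriv d t / d t) (Icc 0 t₀) :=
    (hd2.continuous.continuousOn).div (hd1.continuous.continuousOn)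
      (fun x hx => ne_of_gt (hdpos x hx.1))
  obtain ⟨K, hK⟩ := isCompact_Icc.exists_bound_of_continuousOn hcont
  refine ⟨max K (max B c), ?_⟩
  intro t ht
  rcases le_total t t₀ with h | h
  · have := hK t ⟨ht, h⟩
    rw [Real.norm_eq_abs] at this
    exact le_trans this (le_max_left _ _)
  · have h1 : deriv d t / d t ≤ B := hub t ht
    have h2 : -c ≤ deriv d t / d t := by linarith [hlow t h]
    rw [abs_le]
    refine ⟨?_, le_trans h1 (le_trans (le_max_left B c) (le_max_right _ _))⟩
    have hc : c ≤ max K (max B c) := le_trans (le_max_right B c) (le_max_right _ _)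
    linarith
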